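/- Consider a line network of length L formed by DMCs Q_1,…,Q_L with finite input alphabet 𝒬ᵢ and output alphabet 𝒬ₒ such that ε_{Q_ℓ} ≥ ε > 0 for all ℓ. Then for every batch size M and inner block-length N, the batched-code capacity satisfies C_L(M,N) ≤ ((1 − ε^{N(2|𝒬ᵢ|^N + K)})^{⌊L/K⌋} / N) · min{ M·log|𝒜| , N·log|𝒬ₒ| }, where K = ⌈N·log₂|𝒬ᵢ|⌉. -/

import Mathlib

open scoped BigOperators

def IsDist {α : Type*} [Fintype α] (p : α → ℝ) : Prop :=
  (∀ x, 0 ≤ p x) ∧ ∑ x, p x = 1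

def IsStoch {α β : Type*} [Fintype α] [Fintype β] (W : Matrix α β ℝ) : Prop :=
  ∀ x, (∀ y, 0 ≤ W x y) ∧ ∑ y, W x y = 1

/-- Mutual information `I(p, W)` (base-2 logarithm) between the input of channel `W`,
distributed according to `p`, and the corresponding output. -/
noncomputable def mutualInfo {α β : Type*} [Fintype α] [Fintype β]
    (p : α → ℝ) (W : Matrix α β ℝ) : ℝ :=
  ∑ x, ∑ y, p x * W x y * Real.logb 2 (W x y / ∑ x', p x' * W x' y)

/-- `N`-fold memoryless extension `Q^{⊗N}` of a channel. -/
noncomputable def tensorPow {α β : Type*} [Fintype α] [Fintype β] (N : ℕ)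
    (Q : Matrix α β ℝ) : Matrix (Fin N → α) (Fin N → β) ℝ :=
  Matrix.of fun u y => ∏ i, Q (u i) (y i)

/-- `chain Q Φ n = Q 0 * Φ 0 * Q 1 * Φ 1 * ⋯ * Q n`. -/
noncomputable def chain {β γ : Type*} [Fintype β] [Fintype γ]
    (Q : ℕ → Matrix β γ ℝ) (Φ : ℕ → Matrix γ β ℝ) : ℕ → Matrix β γ ℝ
  | 0 => Q 0
  | (n+1) => chain Q Φ n * Φ n * Q (n+1)

/-- End-to-end transition matrix `W_L = F Q₁^{⊗N} Φ₁ Q₂^{⊗N} ⋯ Φ_{L-1} Q_L^{⊗N}` of a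
batched code with batch alphabet `A`, batch size `M`, inner block-length `N`,
over the line network of length `L` whose `ℓ`-th link is the DMC `Q (ℓ-1)` (0-indexed). -/
noncomputable def endToEnd {A Qi Qo : Type*} [Fintype A] [Fintype Qi] [Fintype Qo]
    (L M N : ℕ)
    (F : Matrix (Fin M → A) (Fin N → Qi) ℝ)
    (Q : ℕ → Matrix Qi Qo ℝ)
    (Φ : ℕ → Matrix (Fin N → Qo) (Fin N → Qi) ℝ) :
    Matrix (Fin M → A) (Fin N → Qo) ℝ :=
  F * chain (fun ℓ => tensorPow N (Q ℓ)) Φ (L - 1)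

/-- Shannon capacity of a DMC, as the supremum of mutual information over input
distributions. -/
noncomputable def capacity {α β : Type*} [Fintype α] [Fintype β] (W : Matrix α β ℝ) : ℝ :=
  sSup {I : ℝ | ∃ p : α → ℝ, IsDist p ∧ I = mutualInfo p W}



set_option linter.unusedSectionVars false
set_option linter.unusedVariables false

-- ## helper lemmas

lemma IsStoch.nonneg {α β : Type*} [Fintype α] [Fintype β] {W : Matrix α β ℝ}
    (h : IsStoch W) (x : α) (y : β) : 0 ≤ W x y := (h x).1 y

lemma IsStoch.rowsum {α β : Type*} [Fintype α] [Fintype β] {W : Matrix α β ℝ}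
    (h : IsStoch W) (x : α) : ∑ y, W x y = 1 := (h x).2

lemma IsStoch.le_one {α β : Type*} [Fintype α] [Fintype β] {W : Matrix α β ℝ}
    (h : IsStoch W) (x : α) (y : β) : W x y ≤ 1 := by
  have := (h x).2
  calc W x y ≤ ∑ y', W x y' := Finset.single_le_sum (fun i _ => (h x).1 i) (Finset.mem_univ y)
  _ = 1 := (h x).2

lemma IsStoch.mul {α β γ : Type*} [Fintype α] [Fintype β] [Fintype γ]
    {U : Matrix α β ℝ} {V : Matrix β γ ℝ} (hU : IsStoch U) (hV : IsStoch V) :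
    IsStoch (U * V) := by
  intro x
  constructor
  · intro y
    rw [Matrix.mul_apply]
    exact Finset.sum_nonneg fun z _ => mul_nonneg (hU.nonneg x z) (hV.nonneg z y)
  · simp only [Matrix.mul_apply]
    rw [Finset.sum_comm]
    simp only [← Finset.mul_sum]
    simp only [hV.rowsum, mul_one, hU.rowsum]

lemma IsStoch.one {α : Type*} [Fintype α] [DecidableEq α] : IsStoch (1 : Matrix α α ℝ) := by
  intro x
  constructor
  · intro y
    by_cases h : x = y <;> simp [Matrix.one_apply, h]
  · simp [Matrix.one_apply]

-- two-point log-sum inequality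
lemma logsum2 {u1 v1 u2 v2 : ℝ} (hu1 : 0 < u1) (hv1 : 0 < v1) (hu2 : 0 < u2) (hv2 : 0 < v2) :
    (u1 + u2) * Real.log ((u1 + u2) / (v1 + v2)) ≤
      u1 * Real.log (u1 / v1) + u2 * Real.log (u2 / v2) := by
  have hU : (0:ℝ) < u1 + u2 := by linarith
  have hV : (0:ℝ) < v1 + v2 := by linarith
  have key : ∀ ui vi : ℝ, 0 < ui → 0 < vi →
      ui * Real.log ((u1+u2)/(v1+v2)) - ui * Real.log (ui/vi) ≤ (u1+u2) * vi / (v1+v2) - ui := by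
    intro ui vi hui hvi
    have h := Real.log_le_sub_one_of_pos (x := ((u1+u2)*vi)/((v1+v2)*ui)) (by positivity)
    have hlog : Real.log (((u1+u2)*vi)/((v1+v2)*ui))
        = Real.log ((u1+u2)/(v1+v2)) - Real.log (ui/vi) := by
      rw [Real.log_div (by positivity) (by positivity),
          Real.log_div (by positivity) (by positivity),
          Real.log_div (by positivity) (by positivity),
          Real.log_mul (by positivity) (by positivity),
          Real.log_mul (by positivity) (by positivity)]
      ring
    rw [hlog] at h
    have h2 := mul_le_mul_of_nonneg_left h (le_of_lt hui)
    calc ui * Real.log ((u1+u2)/(v1+v2)) - ui * Real.log (ui/vi)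
        = ui * (Real.log ((u1+u2)/(v1+v2)) - Real.log (ui/vi)) := by ring
      _ ≤ ui * (((u1+u2)*vi)/((v1+v2)*ui) - 1) := h2
      _ = (u1+u2) * vi / (v1+v2) - ui := by field_simp
  have k1 := key u1 v1 hu1 hv1
  have k2 := key u2 v2 hu2 hv2
  have hsum : (u1+u2)*v1/(v1+v2) - u1 + ((u1+u2)*v2/(v1+v2) - u2) = 0 := by
    field_simp; ring
  linarith [k1, k2]


lemma keyconv {pp a b c δ t : ℝ} (hpp : 0 ≤ pp) (ha : 0 ≤ a) (hb : 0 ≤ b) (hc : 0 ≤ c)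
    (hδ : 0 ≤ δ) (ht : 0 ≤ t) (hδt : δ + t = 1) (hab : pp * a ≤ b) :
    pp * (δ * c + t * a) * Real.logb 2 ((δ * c + t * a) / (δ * c + t * b)) ≤
      t * (pp * a * Real.logb 2 (a / b)) := by
  rcases eq_or_lt_of_le hpp with hpp0 | hpp0
  · simp [← hpp0]
  rcases eq_or_lt_of_le ha with ha0 | ha0
  · -- a = 0
    have hRHS : t * (pp * a * Real.logb 2 (a / b)) = 0 := by rw [← ha0]; ring
    rw [hRHS]
    rcases eq_or_lt_of_le (by positivity : (0:ℝ) ≤ δ * c) with hX | hX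
    · rw [← ha0, ← hX]; simp
    · have harg1 : δ * c + t * a ≤ δ * c + t * b := by nlinarith
      have hlogle : Real.logb 2 ((δ * c + t * a) / (δ * c + t * b)) ≤ 0 := by
        apply Real.logb_nonpos one_lt_two
        · positivity
        · rw [div_le_one (by nlinarith)]; exact harg1
      have : pp * (δ * c + t * a) ≥ 0 := by positivity
      exact mul_nonpos_of_nonneg_of_nonpos this hlogle
  · -- a > 0
    have hb' : 0 < b := lt_of_lt_of_le (by positivity) hab
    rcases eq_or_lt_of_le ht with ht0 | ht0
    · -- t = 0
      rw [← ht0]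
      simp only [zero_mul, add_zero]
      rcases eq_or_lt_of_le (by positivity : (0:ℝ) ≤ δ * c) with hX | hX
      · rw [← hX]; simp
      · rw [div_self (ne_of_gt hX), Real.logb_one]; simp
    · rcases eq_or_lt_of_le (by positivity : (0:ℝ) ≤ δ * c) with hX | hX
      · rw [← hX]
        simp only [zero_add]
        rw [mul_div_mul_left a b (ne_of_gt ht0)]
        apply le_of_eq; ring
      · -- main case
        have hlog2 : 0 < Real.log 2 := Real.log_pos one_lt_two
        have h2 : (δ * c + t * a) * Real.log ((δ * c + t * a) / (δ * c + t * b)) ≤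
            (t * a) * Real.log (a / b) := by
          have h := logsum2 hX hX (by positivity : (0:ℝ) < t * a) (by positivity : (0:ℝ) < t * b)
          rw [div_self (ne_of_gt hX), Real.log_one, mul_zero, zero_add,
              mul_div_mul_left a b (ne_of_gt ht0)] at h
          exact h
        have h3 := mul_le_mul_of_nonneg_left h2 hpp
        calc pp * (δ * c + t * a) * Real.logb 2 ((δ * c + t * a) / (δ * c + t * b))
            = (pp * ((δ * c + t * a) * Real.log ((δ * c + t * a) / (δ * c + t * b)))) / Real.log 2 := by
              rw [Real.logb]; ring
          _ ≤ (pp * ((t * a) * Real.log (a / b))) / Real.log 2 := by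
              gcongr
          _ = t * (pp * a * Real.logb 2 (a / b)) := by rw [Real.logb]; ring


lemma mi_mix_le {α β : Type*} [Fintype α] [Fintype β] {p : α → ℝ} (hp : IsDist p)
    {D : Matrix α β ℝ} (hD : IsStoch D) {q : β → ℝ} (hq : IsDist q) {δ : ℝ}
    (h0 : 0 ≤ δ) (h1 : δ ≤ 1) :
    mutualInfo p (Matrix.of fun x y => δ * q y + (1 - δ) * D x y) ≤
      (1 - δ) * mutualInfo p D := by
  unfold mutualInfo
  rw [Finset.mul_sum]
  apply Finset.sum_le_sum; intro x _
  rw [Finset.mul_sum]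
  apply Finset.sum_le_sum; intro y _
  have hq2 : ∑ x', p x' * Matrix.of (fun x y => δ * q y + (1 - δ) * D x y) x' y
      = δ * q y + (1 - δ) * ∑ x', p x' * D x' y := by
    simp only [Matrix.of_apply]
    have : ∀ x', p x' * (δ * q y + (1 - δ) * D x' y)
        = δ * q y * p x' + (1 - δ) * (p x' * D x' y) := fun _ => by ring
    rw [Finset.sum_congr rfl (fun x' _ => this x'), Finset.sum_add_distrib,
        ← Finset.mul_sum, ← Finset.mul_sum, hp.2, mul_one]
  rw [hq2, Matrix.of_apply]
  exact keyconv (hp.1 x) ((hD x).1 y) (Finset.sum_nonneg fun x' _ =>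
      mul_nonneg (hp.1 x') ((hD x').1 y)) (hq.1 y) h0 (by linarith) (by ring)
    (Finset.single_le_sum (f := fun x' => p x' * D x' y)
      (fun i _ => mul_nonneg (hp.1 i) ((hD i).1 y)) (Finset.mem_univ x))


lemma neg_sum_logb_le {ι : Type*} [Fintype ι] [Nonempty ι] {q : ι → ℝ}
    (h0 : ∀ y, 0 ≤ q y) (h1 : ∑ y, q y = 1) :
    - ∑ y, q y * Real.logb 2 (q y) ≤ Real.logb 2 (Fintype.card ι) := by
  set K : ℝ := (Fintype.card ι : ℝ) with hKdef
  have hK : (1:ℝ) ≤ K := by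
    rw [hKdef]; exact_mod_cast Nat.one_le_iff_ne_zero.mpr (Fintype.card_ne_zero)
  have hK0 : (0:ℝ) < K := by linarith
  have per : ∀ y, q y - 1/K ≤ q y * Real.log (q y * K) := by
    intro y
    rcases eq_or_lt_of_le (h0 y) with h | h
    · rw [← h]; simp; positivity
    · have hx : 0 < q y * K := by positivity
      have hl := Real.log_le_sub_one_of_pos (show (0:ℝ) < (q y * K)⁻¹ by positivity)
      rw [Real.log_inv] at hl
      have h2 : 1 - (q y * K)⁻¹ ≤ Real.log (q y * K) := by linarith
      calc q y - 1/K = q y * (1 - (q y * K)⁻¹) := by field_simp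
        _ ≤ q y * Real.log (q y * K) := mul_le_mul_of_nonneg_left h2 (h0 y)
  have hsum : (0:ℝ) ≤ ∑ y, q y * Real.log (q y * K) := by
    have : ∑ y : ι, (q y - 1/K) ≤ ∑ y, q y * Real.log (q y * K) :=
      Finset.sum_le_sum (fun y _ => per y)
    have hl : ∑ y : ι, (q y - 1/K) = 0 := by
      rw [Finset.sum_sub_distrib, h1, Finset.sum_const, Finset.card_univ, nsmul_eq_mul]
      field_simp
      rw [hKdef]; ring
    linarith [hl ▸ this]
  have hsplit : ∑ y, q y * Real.log (q y * K) = (∑ y, q y * Real.log (q y)) + Real.log K := by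
    have : ∀ y, q y * Real.log (q y * K) = q y * Real.log (q y) + q y * Real.log K := by
      intro y
      rcases eq_or_lt_of_le (h0 y) with h | h
      · rw [← h]; simp
      · rw [Real.log_mul (ne_of_gt h) (ne_of_gt hK0)]; ring
    rw [Finset.sum_congr rfl (fun y _ => this y), Finset.sum_add_distrib, ← Finset.sum_mul, h1,
      one_mul]
  have hmain : - ∑ y, q y * Real.log (q y) ≤ Real.log K := by linarith
  have hlog2 : (0:ℝ) < Real.log 2 := Real.log_pos one_lt_two
  have : ∑ y, q y * Real.logb 2 (q y) = (∑ y, q y * Real.log (q y)) / Real.log 2 := by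
    rw [Finset.sum_div]
    exact Finset.sum_congr rfl (fun y _ => by rw [Real.logb]; ring)
  rw [this, Real.logb, ← neg_div]
  gcongr


section triv
variable {α β : Type*} [Fintype α] [Fintype β] {p : α → ℝ} {W : Matrix α β ℝ}

lemma wle {x : α} {y : β} (hp : IsDist p) (hW : IsStoch W) :
    p x * W x y ≤ ∑ x', p x' * W x' y :=
  Finset.single_le_sum (f := fun x' => p x' * W x' y)
    (fun i _ => mul_nonneg (hp.1 i) ((hW i).1 y)) (Finset.mem_univ x)

lemma entry_le_one (hW : IsStoch W) (x : α) (y : β) : W x y ≤ 1 := by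
  calc W x y ≤ ∑ y', W x y' := Finset.single_le_sum (fun i _ => (hW x).1 i) (Finset.mem_univ y)
    _ = 1 := (hW x).2

lemma mi_le_out [Nonempty β] (hp : IsDist p) (hW : IsStoch W) :
    mutualInfo p W ≤ Real.logb 2 (Fintype.card β) := by
  set q : β → ℝ := fun y => ∑ x', p x' * W x' y with hqdef
  have hmi : mutualInfo p W = ∑ x, ∑ y, p x * W x y * Real.logb 2 (W x y / q y) := rfl
  have hq0 : ∀ y, 0 ≤ q y := fun y =>
    Finset.sum_nonneg fun x' _ => mul_nonneg (hp.1 x') ((hW x').1 y)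
  have hq1 : ∑ y, q y = 1 := by
    rw [hqdef]
    rw [Finset.sum_comm]
    simp only [← Finset.mul_sum]
    simp only [(fun x => (hW x).2), mul_one, hp.2]
  have step1 : mutualInfo p W ≤ - ∑ y, q y * Real.logb 2 (q y) := by
    rw [hmi]
    have per : ∀ x y, p x * W x y * Real.logb 2 (W x y / q y)
        ≤ - (p x * W x y * Real.logb 2 (q y)) := by
      intro x y
      rcases eq_or_lt_of_le (hp.1 x) with hx | hx
      · rw [← hx]; simp
      rcases eq_or_lt_of_le ((hW x).1 y) with hw | hw
      · rw [← hw]; simp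
      have hqy : 0 < q y := lt_of_lt_of_le (by positivity) (wle hp hW)
      rw [Real.logb_div (ne_of_gt hw) (ne_of_gt hqy)]
      have hWle : Real.logb 2 (W x y) ≤ 0 :=
        Real.logb_nonpos one_lt_two (le_of_lt hw) (entry_le_one hW x y)
      have h0 : p x * W x y * Real.logb 2 (W x y) ≤ 0 :=
        mul_nonpos_of_nonneg_of_nonpos (by positivity) hWle
      nlinarith [h0]
    calc ∑ x, ∑ y, p x * W x y * Real.logb 2 (W x y / q y)
        ≤ ∑ x, ∑ y, - (p x * W x y * Real.logb 2 (q y)) :=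
          Finset.sum_le_sum fun x _ => Finset.sum_le_sum fun y _ => per x y
      _ = - ∑ y, q y * Real.logb 2 (q y) := by
          rw [← Finset.sum_neg_distrib, Finset.sum_comm]
          apply Finset.sum_congr rfl; intro y _
          rw [Finset.sum_congr rfl (fun x _ => by ring : ∀ x ∈ Finset.univ,
            -(p x * W x y * Real.logb 2 (q y)) = p x * W x y * (-Real.logb 2 (q y)))]
          rw [← Finset.sum_mul]
          have hq : q y = ∑ x, p x * W x y := rfl
          rw [hq]; ring
  exact le_trans step1 (neg_sum_logb_le hq0 hq1)

lemma mi_le_in [Nonempty α] (hp : IsDist p) (hW : IsStoch W) :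
    mutualInfo p W ≤ Real.logb 2 (Fintype.card α) := by
  set q : β → ℝ := fun y => ∑ x', p x' * W x' y with hqdef
  have step1 : mutualInfo p W + ∑ x, p x * Real.logb 2 (p x) ≤ 0 := by
    unfold mutualInfo
    have hexp : ∀ x, p x * Real.logb 2 (p x) = ∑ y, p x * W x y * Real.logb 2 (p x) := by
      intro x
      rw [← Finset.sum_mul, ← Finset.mul_sum, (hW x).2, mul_one]
    rw [Finset.sum_congr rfl (fun x _ => hexp x), ← Finset.sum_add_distrib]
    have inner : ∀ x, ∑ y, p x * W x y * Real.logb 2 (W x y / q y)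
        + ∑ y, p x * W x y * Real.logb 2 (p x)
        = ∑ y, (p x * W x y * Real.logb 2 (W x y / q y) + p x * W x y * Real.logb 2 (p x)) :=
      fun x => (Finset.sum_add_distrib).symm
    rw [Finset.sum_congr rfl (fun x _ => inner x)]
    apply Finset.sum_nonpos; intro x _
    apply Finset.sum_nonpos; intro y _
    rcases eq_or_lt_of_le (hp.1 x) with hx | hx
    · rw [← hx]; simp
    rcases eq_or_lt_of_le ((hW x).1 y) with hw | hw
    · rw [← hw]; simp
    have hr : 0 < p x * W x y := by positivity
    have hqy : 0 < q y := lt_of_lt_of_le hr (wle hp hW)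
    rw [Real.logb_div (ne_of_gt hw) (ne_of_gt hqy)]
    have : Real.logb 2 (W x y) + Real.logb 2 (p x) = Real.logb 2 (p x * W x y) := by
      rw [Real.logb_mul (ne_of_gt hx) (ne_of_gt hw)]; ring
    have hle : Real.logb 2 (p x * W x y) ≤ Real.logb 2 (q y) :=
      Real.logb_le_logb_of_le one_lt_two hr (wle hp hW)
    nlinarith
  have h2 : - ∑ x, p x * Real.logb 2 (p x) ≤ Real.logb 2 (Fintype.card α) :=
    neg_sum_logb_le hp.1 hp.2
  linarith

end triv


lemma isStoch_tensorPow {α β : Type*} [Fintype α] [Fintype β] (N : ℕ)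
    {Q : Matrix α β ℝ} (hQ : IsStoch Q) : IsStoch (tensorPow N Q) := by
  intro u
  constructor
  · intro y
    show (0:ℝ) ≤ ∏ i, Q (u i) (y i)
    exact Finset.prod_nonneg fun i _ => (hQ (u i)).1 (y i)
  · have h := Finset.prod_univ_sum (fun _ : Fin N => (Finset.univ : Finset β))
      (fun i b => Q (u i) b)
    rw [Fintype.piFinset_univ] at h
    show ∑ y : Fin N → β, ∏ i, Q (u i) (y i) = 1
    rw [← h]
    simp only [(fun i => (hQ (u i)).2)]
    simp

noncomputable def tailc {β γ : Type*} [Fintype β] [Fintype γ]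
    (Qm : ℕ → Matrix β γ ℝ) (Φ : ℕ → Matrix γ β ℝ) (a k : ℕ) : Matrix β γ ℝ :=
  chain (fun i => Qm (a + i)) (fun i => Φ (a + i)) k

lemma tailc_zero {β γ : Type*} [Fintype β] [Fintype γ]
    (Qm : ℕ → Matrix β γ ℝ) (Φ : ℕ → Matrix γ β ℝ) (a : ℕ) :
    tailc Qm Φ a 0 = Qm a := by
  simp [tailc, chain]

lemma tailc_succ {β γ : Type*} [Fintype β] [Fintype γ]
    (Qm : ℕ → Matrix β γ ℝ) (Φ : ℕ → Matrix γ β ℝ) (a k : ℕ) :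
    tailc Qm Φ a (k + 1) = tailc Qm Φ a k * Φ (a + k) * Qm (a + (k + 1)) := rfl

lemma isStoch_tailc {β γ : Type*} [Fintype β] [Fintype γ]
    {Qm : ℕ → Matrix β γ ℝ} {Φ : ℕ → Matrix γ β ℝ}
    (hQ : ∀ ℓ, IsStoch (Qm ℓ)) (hΦ : ∀ ℓ, IsStoch (Φ ℓ)) (a k : ℕ) :
    IsStoch (tailc Qm Φ a k) := by
  induction k with
  | zero => rw [tailc_zero]; exact hQ a
  | succ k ih => rw [tailc_succ]; exact (ih.mul (hΦ _)).mul (hQ _)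

lemma tailc_split {β γ : Type*} [Fintype β] [Fintype γ]
    (Qm : ℕ → Matrix β γ ℝ) (Φ : ℕ → Matrix γ β ℝ) (a k j : ℕ) :
    tailc Qm Φ a (k + j + 1) = tailc Qm Φ a k * Φ (a + k) * tailc Qm Φ (a + k + 1) j := by
  induction j with
  | zero =>
    rw [tailc_succ, tailc_zero]
    have : a + (k + 1) = a + k + 1 := by omega
    rw [this]
  | succ j ih =>
    have h1 : k + (j + 1) + 1 = (k + j + 1) + 1 := by omega
    rw [h1, tailc_succ, ih, tailc_succ]
    have h2 : a + k + 1 + j = a + (k + j + 1) := by omega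
    have h3 : a + k + 1 + (j + 1) = a + (k + (j + 1) + 1) := by omega
    rw [h2, h3]
    have h4 : k + j + 1 + 1 = k + (j + 1) + 1 := by omega
    rw [h4]
    simp only [Matrix.mul_assoc]


section doeblin

variable {Qi Qo : Type*} [Fintype Qi] [Fintype Qo] [Nonempty Qi] [Nonempty Qo]
  {N : ℕ} {ε : ℝ}
  {Q : ℕ → Matrix Qi Qo ℝ} {Φ : ℕ → Matrix (Fin N → Qo) (Fin N → Qi) ℝ}

-- (a) pairwise overlap point for tensor powers
lemma pair_point (hε : 0 ≤ ε) (hεQ : ∀ (ℓ : ℕ) (x x' : Qi), ∃ y, ε ≤ Q ℓ x y ∧ ε ≤ Q ℓ x' y)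
    (ℓ : ℕ) (u u' : Fin N → Qi) :
    ∃ y : Fin N → Qo, ε ^ N ≤ tensorPow N (Q ℓ) u y ∧ ε ^ N ≤ tensorPow N (Q ℓ) u' y := by
  choose f hf1 hf2 using hεQ ℓ
  refine ⟨fun i => f (u i) (u' i), ?_, ?_⟩
  · show ε ^ N ≤ ∏ i, Q ℓ (u i) (f (u i) (u' i))
    calc ε ^ N = ∏ _i : Fin N, ε := by rw [Finset.prod_const, Finset.card_univ, Fintype.card_fin]
      _ ≤ ∏ i, Q ℓ (u i) (f (u i) (u' i)) :=
        Finset.prod_le_prod (fun _ _ => hε) (fun i _ => hf1 (u i) (u' i))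
  · show ε ^ N ≤ ∏ i, Q ℓ (u' i) (f (u i) (u' i))
    calc ε ^ N = ∏ _i : Fin N, ε := by rw [Finset.prod_const, Finset.card_univ, Fintype.card_fin]
      _ ≤ ∏ i, Q ℓ (u' i) (f (u i) (u' i)) :=
        Finset.prod_le_prod (fun _ _ => hε) (fun i _ => hf2 (u i) (u' i))

-- (b) overlap of pushed measures
lemma overlap_push (hε : 0 ≤ ε) (hQ : ∀ ℓ, IsStoch (Q ℓ))
    (hεQ : ∀ (ℓ : ℕ) (x x' : Qi), ∃ y, ε ≤ Q ℓ x y ∧ ε ≤ Q ℓ x' y)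
    (ℓ : ℕ) {u v : (Fin N → Qi) → ℝ} {b : ℝ}
    (hu : ∀ z, 0 ≤ u z) (hv : ∀ z, 0 ≤ v z)
    (hub : ∑ z, u z = b) (hvb : ∑ z, v z = b) (hb : 0 < b) :
    b * ε ^ N ≤ ∑ w, min (∑ z, u z * tensorPow N (Q ℓ) z w)
      (∑ z, v z * tensorPow N (Q ℓ) z w) := by
  set G := tensorPow N (Q ℓ) with hG
  have hGst : IsStoch G := isStoch_tensorPow N (hQ ℓ)
  have hovl : ∀ z z', ε ^ N ≤ ∑ w, min (G z w) (G z' w) := by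
    intro z z'
    obtain ⟨y, h1, h2⟩ := pair_point hε hεQ ℓ z z'
    calc ε ^ N ≤ min (G z y) (G z' y) := le_min h1 h2
      _ ≤ ∑ w, min (G z w) (G z' w) := Finset.single_le_sum
        (fun w _ => le_min ((hGst z).1 w) ((hGst z').1 w)) (Finset.mem_univ y)
  -- T := triple sum
  have upper : ∀ w, ∑ z, ∑ z', u z * v z' * min (G z w) (G z' w)
      ≤ b * min (∑ z, u z * G z w) (∑ z, v z * G z w) := by
    intro w
    rw [mul_min_of_nonneg _ _ (le_of_lt hb)]
    apply le_min
    · calc ∑ z, ∑ z', u z * v z' * min (G z w) (G z' w)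
          ≤ ∑ z, ∑ z', u z * v z' * G z w := by
            apply Finset.sum_le_sum; intro z _; apply Finset.sum_le_sum; intro z' _
            exact mul_le_mul_of_nonneg_left (min_le_left _ _)
              (mul_nonneg (hu z) (hv z'))
        _ = b * ∑ z, u z * G z w := by
            rw [Finset.mul_sum]
            apply Finset.sum_congr rfl; intro z _
            calc ∑ z', u z * v z' * G z w = ∑ z', v z' * (u z * G z w) := by
                  apply Finset.sum_congr rfl; intro z' _; ring
              _ = (∑ z', v z') * (u z * G z w) := (Finset.sum_mul _ _ _).symm
              _ = b * (u z * G z w) := by rw [hvb]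
    · calc ∑ z, ∑ z', u z * v z' * min (G z w) (G z' w)
          ≤ ∑ z, ∑ z', u z * v z' * G z' w := by
            apply Finset.sum_le_sum; intro z _; apply Finset.sum_le_sum; intro z' _
            exact mul_le_mul_of_nonneg_left (min_le_right _ _)
              (mul_nonneg (hu z) (hv z'))
        _ = b * ∑ z', v z' * G z' w := by
            rw [Finset.sum_comm]
            rw [Finset.mul_sum]
            apply Finset.sum_congr rfl; intro z' _
            calc ∑ z, u z * v z' * G z' w = (∑ z, u z) * (v z' * G z' w) := by
                  rw [Finset.sum_mul]
                  apply Finset.sum_congr rfl; intro z _; ring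
              _ = b * (v z' * G z' w) := by rw [hub]
  have lower : b * b * ε ^ N ≤ ∑ w, ∑ z, ∑ z', u z * v z' * min (G z w) (G z' w) := by
    have swap : ∑ w, ∑ z, ∑ z', u z * v z' * min (G z w) (G z' w)
        = ∑ z, ∑ z', u z * v z' * ∑ w, min (G z w) (G z' w) := by
      rw [Finset.sum_comm]
      apply Finset.sum_congr rfl; intro z _
      rw [Finset.sum_comm]
      apply Finset.sum_congr rfl; intro z' _
      rw [Finset.mul_sum]
    rw [swap]
    have inner : ∀ z, ∑ z', u z * v z' * ε ^ N = u z * ε ^ N * b := by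
      intro z
      rw [← hvb, Finset.mul_sum]
      apply Finset.sum_congr rfl; intro z' _; ring
    calc b * b * ε ^ N = ∑ z, ∑ z', u z * v z' * ε ^ N := by
          rw [Finset.sum_congr rfl (fun z _ => inner z), ← Finset.sum_mul, ← Finset.sum_mul, hub]
          ring
      _ ≤ ∑ z, ∑ z', u z * v z' * ∑ w, min (G z w) (G z' w) := by
          apply Finset.sum_le_sum; intro z _; apply Finset.sum_le_sum; intro z' _
          exact mul_le_mul_of_nonneg_left (hovl z z') (mul_nonneg (hu z) (hv z'))
  have final : b * (b * ε ^ N) ≤ b * ∑ w, min (∑ z, u z * G z w) (∑ z, v z * G z w) := by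
    calc b * (b * ε ^ N) = b * b * ε ^ N := by ring
      _ ≤ ∑ w, ∑ z, ∑ z', u z * v z' * min (G z w) (G z' w) := lower
      _ ≤ ∑ w, b * min (∑ z, u z * G z w) (∑ z, v z * G z w) :=
          Finset.sum_le_sum fun w _ => upper w
      _ = b * ∑ w, min (∑ z, u z * G z w) (∑ z, v z * G z w) := by
          rw [Finset.mul_sum]
  exact le_of_mul_le_mul_left final hb

end doeblin

section merge
variable {Qi Qo : Type*} [Fintype Qi] [Fintype Qo] [Nonempty Qi] [Nonempty Qo]
  {N : ℕ} {ε : ℝ}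
  {Q : ℕ → Matrix Qi Qo ℝ} {Φ : ℕ → Matrix (Fin N → Qo) (Fin N → Qi) ℝ}

lemma merge_claim (hε : 0 < ε) (hε1 : ε ≤ 1) (hQ : ∀ ℓ, IsStoch (Q ℓ))
    (hεQ : ∀ (ℓ : ℕ) (x x' : Qi), ∃ y, ε ≤ Q ℓ x y ∧ ε ≤ Q ℓ x' y)
    (hΦ : ∀ ℓ, IsStoch (Φ ℓ)) :
    ∀ (j a : ℕ) (S : Finset (Fin N → Qi)), S.card ≤ 2 ^ (j + 1) →
    ∃ μ : (Fin N → Qo) → ℝ, (∀ y, 0 ≤ μ y) ∧ ε ^ (N * (j + 1)) ≤ ∑ y, μ y ∧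
      ∀ x ∈ S, ∀ y, μ y ≤ tailc (fun ℓ => tensorPow N (Q ℓ)) Φ a j x y := by
  classical
  intro j
  induction j with
  | zero =>
    intro a S hS
    set G := tensorPow N (Q a) with hGdef
    have hGst : IsStoch G := isStoch_tensorPow N (hQ a)
    obtain ⟨x, x', hsub⟩ : ∃ x x' : Fin N → Qi, S ⊆ {x, x'} := by
      rcases S.eq_empty_or_nonempty with h | h
      · exact ⟨Classical.arbitrary _, Classical.arbitrary _, by simp [h]⟩
      · obtain ⟨x, hx⟩ := h
        rcases (S.erase x).eq_empty_or_nonempty with h2 | h2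
        · refine ⟨x, x, fun z hz => ?_⟩
          have hzx : z = x := by
            by_contra hne
            have : z ∈ S.erase x := Finset.mem_erase.mpr ⟨hne, hz⟩
            rw [h2] at this
            exact absurd this (Finset.notMem_empty z)
          simp [hzx]
        · obtain ⟨x', hx'⟩ := h2
          refine ⟨x, x', fun z hz => ?_⟩
          by_contra hzm
          rw [Finset.mem_insert, Finset.mem_singleton] at hzm
          push_neg at hzm
          obtain ⟨hzx, hzx'⟩ := hzm
          have hx'S := (Finset.mem_erase.mp hx').2
          have hxx' : x' ≠ x := (Finset.mem_erase.mp hx').1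
          have hsub3 : ({z, x, x'} : Finset _) ⊆ S := by
            intro t ht
            rw [Finset.mem_insert, Finset.mem_insert, Finset.mem_singleton] at ht
            rcases ht with h | h | h <;> subst h <;> assumption
          have hcard3 : ({z, x, x'} : Finset _).card = 3 := by
            rw [Finset.card_insert_of_notMem (by simp [hzx, hzx']),
              Finset.card_insert_of_notMem (by simp [Ne.symm hxx']),
              Finset.card_singleton]
          have := Finset.card_le_card hsub3
          norm_num at hS
          omega
    refine ⟨fun y => min (G x y) (G x' y), fun y => le_min ((hGst x).1 y) ((hGst x').1 y),
      ?_, ?_⟩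
    · obtain ⟨y, h1, h2⟩ := pair_point hε.le hεQ a x x'
      have hNe : N * (0 + 1) = N := by ring
      rw [hNe]
      calc ε ^ N ≤ min (G x y) (G x' y) := le_min h1 h2
        _ ≤ ∑ w, min (G x w) (G x' w) := Finset.single_le_sum
            (fun w _ => le_min ((hGst x).1 w) ((hGst x').1 w)) (Finset.mem_univ y)
    · intro z hz y
      rw [tailc_zero]
      rcases Finset.mem_insert.mp (hsub hz) with h | h
      · subst h; exact min_le_left _ _
      · rw [Finset.mem_singleton] at h; subst h; exact min_le_right _ _
  | succ j ih =>
    intro a S hS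
    have hP : (0:ℕ) < 2 ^ (j + 1) := Nat.pow_pos (by norm_num)
    obtain ⟨T, hTsub, hTcard⟩ := Finset.exists_subset_card_eq
      (min_le_left S.card (2 ^ (j + 1)))
    have hS2card : (S \ T).card ≤ 2 ^ (j + 1) := by
      rw [Finset.card_sdiff_of_subset hTsub, hTcard]
      have h2 : 2 ^ (j + 1 + 1) = 2 * 2 ^ (j + 1) := by ring
      rcases le_or_gt S.card (2 ^ (j+1)) with h | h
      · omega
      · rw [min_eq_right h.le] at *; omega
    obtain ⟨μ1, hμ1n, hμ1m, hμ1d⟩ := ih a T (le_trans (le_of_eq hTcard) (min_le_right _ _))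
    obtain ⟨μ2, hμ2n, hμ2m, hμ2d⟩ := ih a (S \ T) hS2card
    set β := ε ^ (N * (j + 1)) with hβdef
    have hβpos : 0 < β := pow_pos hε _
    set E := Φ (a + j) with hEdef
    have hE := hΦ (a + j)
    set G := tensorPow N (Q (a + (j + 1))) with hGdef
    have hGst : IsStoch G := isStoch_tensorPow N (hQ _)
    set ν1 : (Fin N → Qi) → ℝ := fun z => ∑ y, μ1 y * E y z with hν1def
    set ν2 : (Fin N → Qi) → ℝ := fun z => ∑ y, μ2 y * E y z with hν2def
    have hν1n : ∀ z, 0 ≤ ν1 z := fun z =>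
      Finset.sum_nonneg fun y _ => mul_nonneg (hμ1n y) ((hE y).1 z)
    have hν2n : ∀ z, 0 ≤ ν2 z := fun z =>
      Finset.sum_nonneg fun y _ => mul_nonneg (hμ2n y) ((hE y).1 z)
    have hmass : ∀ (μ : (Fin N → Qo) → ℝ), ∑ z, (∑ y, μ y * E y z) = ∑ y, μ y := by
      intro μ
      rw [Finset.sum_comm]
      apply Finset.sum_congr rfl; intro y _
      rw [← Finset.mul_sum, (hE y).2, mul_one]
    set m1 := ∑ y, μ1 y with hm1def
    set m2 := ∑ y, μ2 y with hm2def
    have hm1pos : 0 < m1 := lt_of_lt_of_le hβpos hμ1m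
    have hm2pos : 0 < m2 := lt_of_lt_of_le hβpos hμ2m
    set u : (Fin N → Qi) → ℝ := fun z => (β / m1) * ν1 z with hudef
    set v : (Fin N → Qi) → ℝ := fun z => (β / m2) * ν2 z with hvdef
    have hun : ∀ z, 0 ≤ u z := fun z => mul_nonneg (by positivity) (hν1n z)
    have hvn : ∀ z, 0 ≤ v z := fun z => mul_nonneg (by positivity) (hν2n z)
    have hsumu : ∑ z, u z = β := by
      rw [hudef]
      show ∑ z, β / m1 * ν1 z = β
      rw [← Finset.mul_sum]
      rw [hν1def]
      show β / m1 * ∑ z, (∑ y, μ1 y * E y z) = β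
      rw [hmass μ1, ← hm1def]
      field_simp
    have hsumv : ∑ z, v z = β := by
      rw [hvdef]
      show ∑ z, β / m2 * ν2 z = β
      rw [← Finset.mul_sum]
      rw [hν2def]
      show β / m2 * ∑ z, (∑ y, μ2 y * E y z) = β
      rw [hmass μ2, ← hm2def]
      field_simp
    have hover := overlap_push (N := N) hε.le hQ hεQ (a + (j + 1)) hun hvn hsumu hsumv hβpos
    rw [← hGdef] at hover
    refine ⟨fun w => min (∑ z, u z * G z w) (∑ z, v z * G z w),
      fun w => le_min (Finset.sum_nonneg fun z _ => mul_nonneg (hun z) ((hGst z).1 w))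
        (Finset.sum_nonneg fun z _ => mul_nonneg (hvn z) ((hGst z).1 w)), ?_, ?_⟩
    · have hNe : N * (j + 1 + 1) = N * (j + 1) + N := by ring
      rw [hNe, pow_add, ← hβdef]
      exact hover
    · intro x hxS w
      rw [tailc_succ]
      have hstep : ∀ (μ : (Fin N → Qo) → ℝ) (c : ℝ), 0 ≤ c → c ≤ 1 → (∀ y, 0 ≤ μ y) →
          (∀ y, μ y ≤ tailc (fun ℓ => tensorPow N (Q ℓ)) Φ a j x y) →
          ∑ z, (c * ∑ y, μ y * E y z) * G z w
            ≤ (tailc (fun ℓ => tensorPow N (Q ℓ)) Φ a j * E * G) x w := by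
        intro μ c hc0 hc1 hμn hμd
        rw [Matrix.mul_apply]
        apply Finset.sum_le_sum
        intro z _
        have hν : ∑ y, μ y * E y z ≤ (tailc (fun ℓ => tensorPow N (Q ℓ)) Φ a j * E) x z := by
          rw [Matrix.mul_apply]
          exact Finset.sum_le_sum fun y _ =>
            mul_le_mul_of_nonneg_right (hμd y) ((hE y).1 z)
        have hνn : 0 ≤ ∑ y, μ y * E y z :=
          Finset.sum_nonneg fun y _ => mul_nonneg (hμn y) ((hE y).1 z)
        have : c * ∑ y, μ y * E y z ≤ ∑ y, μ y * E y z := by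
          nlinarith
        exact mul_le_mul_of_nonneg_right (le_trans this hν) ((hGst z).1 w)
      by_cases hT : x ∈ T
      · have h := hstep μ1 (β / m1) (by positivity)
          (by rw [div_le_one hm1pos]; exact hμ1m) hμ1n (fun y => hμ1d x hT y)
        exact le_trans (min_le_left _ _) h
      · have hxS2 : x ∈ S \ T := Finset.mem_sdiff.mpr ⟨hxS, hT⟩
        have h := hstep μ2 (β / m2) (by positivity)
          (by rw [div_le_one hm2pos]; exact hμ2m) hμ2n (fun y => hμ2d x hxS2 y)
        exact le_trans (min_le_right _ _) h
end merge


-- ## peel lemma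
lemma isStoch_res {Z Y' : Type*} [Fintype Z] [Fintype Y'] {V : Matrix Z Y' ℝ}
    (hV : IsStoch V) {q : Y' → ℝ} (hq : IsDist q) {δ : ℝ} (hδ0 : 0 ≤ δ) (hδ1 : δ < 1)
    (hdom : ∀ z y', δ * q y' ≤ V z y') :
    IsStoch (Matrix.of fun z y' => (V z y' - δ * q y') / (1 - δ)) := by
  intro z
  have ht : 0 < 1 - δ := by linarith
  constructor
  · intro y'
    show 0 ≤ (V z y' - δ * q y') / (1 - δ)
    apply div_nonneg _ ht.le
    linarith [hdom z y']
  · show ∑ y', (V z y' - δ * q y') / (1 - δ) = 1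
    rw [← Finset.sum_div, Finset.sum_sub_distrib, (hV z).2, ← Finset.mul_sum, hq.2]
    field_simp

lemma peel {X Z Y' Y : Type*} [Fintype X] [Fintype Z] [Fintype Y'] [Fintype Y]
    {p : X → ℝ} (hp : IsDist p)
    {U : Matrix X Z ℝ} (hU : IsStoch U) {V : Matrix Z Y' ℝ} (hV : IsStoch V)
    {R : Matrix Y' Y ℝ} (hR : IsStoch R) {q : Y' → ℝ} (hq : IsDist q)
    {δ : ℝ} (hδ0 : 0 ≤ δ) (hδ1 : δ < 1)
    (hdom : ∀ z y', δ * q y' ≤ V z y') :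
    mutualInfo p (U * V * R) ≤ (1 - δ) *
      mutualInfo p (U * Matrix.of (fun z y' => (V z y' - δ * q y') / (1 - δ)) * R) := by
  have ht : 0 < 1 - δ := by linarith
  set Vt : Matrix Z Y' ℝ := Matrix.of fun z y' => (V z y' - δ * q y') / (1 - δ) with hVtdef
  have hVt : IsStoch Vt := isStoch_res hV hq hδ0 hδ1 hdom
  set D : Matrix X Y ℝ := U * Vt * R with hDdef
  have hDst : IsStoch D := (hU.mul hVt).mul hR
  set q' : Y → ℝ := fun y => ∑ y', q y' * R y' y with hq'def
  have hq' : IsDist q' := by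
    constructor
    · intro y
      exact Finset.sum_nonneg fun y' _ => mul_nonneg (hq.1 y') ((hR y').1 y)
    · rw [hq'def]
      show ∑ y, (∑ y', q y' * R y' y) = 1
      rw [Finset.sum_comm]
      calc ∑ y', ∑ y, q y' * R y' y = ∑ y', q y' * ∑ y, R y' y := by
            apply Finset.sum_congr rfl; intro y' _; rw [Finset.mul_sum]
        _ = 1 := by simp only [(fun y' => (hR y').2), mul_one, hq.2]
  have key : U * V * R = Matrix.of fun x y => δ * q' y + (1 - δ) * D x y := by
    ext x y
    show (U * V * R) x y = δ * q' y + (1 - δ) * D x y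
    rw [hDdef]
    have hUV : ∀ y', (U * V) x y' = δ * q y' + (1 - δ) * (U * Vt) x y' := by
      intro y'
      rw [Matrix.mul_apply, Matrix.mul_apply]
      have : ∀ z, U x z * V z y' = δ * q y' * U x z + (1 - δ) * (U x z * Vt z y') := by
        intro z
        show U x z * V z y' = δ * q y' * U x z + (1 - δ) * (U x z * ((V z y' - δ * q y') / (1 - δ)))
        field_simp
        ring
      rw [Finset.sum_congr rfl fun z _ => this z, Finset.sum_add_distrib, ← Finset.mul_sum,
        (hU x).2, mul_one, ← Finset.mul_sum]
    rw [Matrix.mul_apply]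
    rw [Finset.sum_congr rfl fun y' _ => by rw [hUV y']]
    rw [Finset.sum_congr rfl (fun y' _ => by ring :
      ∀ y' ∈ Finset.univ, (δ * q y' + (1 - δ) * (U * Vt) x y') * R y' y
        = δ * (q y' * R y' y) + (1 - δ) * ((U * Vt) x y' * R y' y))]
    rw [Finset.sum_add_distrib, ← Finset.mul_sum, ← Finset.mul_sum]
    rw [Matrix.mul_apply]
  rw [key]
  exact mi_mix_le hp hDst hq' hδ0 hδ1.le

lemma main_aux {A Qi Qo : Type*} [Fintype A] [Fintype Qi] [Fintype Qo]
    [Nonempty A] [Nonempty Qi] [Nonempty Qo]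
    (M N K' : ℕ) (hN : 0 < N) (hK : 0 < K')
    (ε : ℝ) (hε : 0 < ε) (hε1 : ε < 1)
    (Q : ℕ → Matrix Qi Qo ℝ) (hQ : ∀ ℓ, IsStoch (Q ℓ))
    (hεQ : ∀ (ℓ : ℕ) (x x' : Qi), ∃ y, ε ≤ Q ℓ x y ∧ ε ≤ Q ℓ x' y)
    (Φ : ℕ → Matrix (Fin N → Qo) (Fin N → Qi) ℝ) (hΦ : ∀ ℓ, IsStoch (Φ ℓ))
    (p : (Fin M → A) → ℝ) (hp : IsDist p)
    (hcard : Fintype.card (Fin N → Qi) ≤ 2 ^ K') :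
    ∀ (s a L' : ℕ), a + s * K' ≤ L' → a < L' →
    ∀ (U : Matrix (Fin M → A) (Fin N → Qi) ℝ), IsStoch U →
    mutualInfo p (U * tailc (fun ℓ => tensorPow N (Q ℓ)) Φ a (L' - 1 - a))
      ≤ (1 - ε ^ (N * K')) ^ s *
        min (Real.logb 2 (Fintype.card (Fin M → A)))
            (Real.logb 2 (Fintype.card (Fin N → Qo))) := by
  classical
  have hQm : ∀ ℓ, IsStoch (tensorPow N (Q ℓ)) := fun ℓ => isStoch_tensorPow N (hQ ℓ)
  set Qm : ℕ → Matrix (Fin N → Qi) (Fin N → Qo) ℝ := fun ℓ => tensorPow N (Q ℓ) with hQmdef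
  set δ₀ : ℝ := ε ^ (N * K') with hδ₀def
  have hδ₀pos : 0 < δ₀ := pow_pos hε _
  have hδ₀le : δ₀ ≤ 1 := pow_le_one₀ hε.le hε1.le
  -- Doeblin property of a segment of K' links
  have doeb : ∀ a : ℕ, ∃ q : (Fin N → Qo) → ℝ, IsDist q ∧
      ∀ x y, δ₀ * q y ≤ tailc Qm Φ a (K' - 1) x y := by
    intro a
    have hKe0 : K' - 1 + 1 = K' := by omega
    obtain ⟨μ, hμn, hμm, hμd⟩ := merge_claim hε hε1.le hQ hεQ hΦ (K' - 1) a Finset.univ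
      (by simpa [Finset.card_univ, hKe0] using hcard)
    have hKe : N * (K' - 1 + 1) = N * K' := by rw [hKe0]
    rw [hKe] at hμm
    set m := ∑ y, μ y with hmdef
    have hmpos : 0 < m := lt_of_lt_of_le hδ₀pos hμm
    refine ⟨fun y => μ y / m, ⟨fun y => div_nonneg (hμn y) hmpos.le, ?_⟩, ?_⟩
    · rw [← Finset.sum_div, ← hmdef]; field_simp
    · intro x y
      have h1 : δ₀ * (μ y / m) ≤ m * (μ y / m) :=
        mul_le_mul_of_nonneg_right hμm (div_nonneg (hμn y) hmpos.le)
      have h2 : m * (μ y / m) = μ y := by field_simp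
      exact le_trans (h1.trans_eq h2) (hμd x (Finset.mem_univ x) y)
  intro s
  induction s with
  | zero =>
    intro a L' h1 h2 U hU
    rw [pow_zero, one_mul]
    exact le_min (mi_le_in hp (hU.mul (isStoch_tailc hQm hΦ _ _)))
      (mi_le_out hp (hU.mul (isStoch_tailc hQm hΦ _ _)))
  | succ s ih =>
    intro a L' h1 h2 U hU
    obtain ⟨q, hq, hdom⟩ := doeb a
    have hδ₀lt : δ₀ < 1 := by
      rw [hδ₀def]
      exact pow_lt_one₀ hε.le hε1 (Nat.mul_ne_zero (by omega) (by omega))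
    set V := tailc Qm Φ a (K' - 1) with hVdef
    have hVst : IsStoch V := isStoch_tailc hQm hΦ _ _
    set Vt : Matrix (Fin N → Qi) (Fin N → Qo) ℝ :=
      Matrix.of (fun z y' => (V z y' - δ₀ * q y') / (1 - δ₀)) with hVtdef
    have hVtst : IsStoch Vt := isStoch_res hVst hq hδ₀pos.le hδ₀lt hdom
    rcases Nat.lt_or_ge (a + K') L' with hcase | hcase
    · -- a + K' < L' : split the tail
      have hsplit : L' - 1 - a = (K' - 1) + (L' - 1 - (a + K')) + 1 := by omega
      rw [hsplit, tailc_split]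
      have hidx : a + (K' - 1) + 1 = a + K' := by omega
      rw [hidx]
      set T' := tailc Qm Φ (a + K') (L' - 1 - (a + K')) with hT'def
      have hT'st : IsStoch T' := isStoch_tailc hQm hΦ _ _
      have hΦst := hΦ (a + (K' - 1))
      set Φb := Φ (a + (K' - 1)) with hΦbdef
      have hR : IsStoch (Φb * T') := hΦst.mul hT'st
      have hassoc : U * (V * Φb * T') = U * V * (Φb * T') := by
        simp only [Matrix.mul_assoc]
      rw [hassoc]
      have step1 := peel hp hU hVst hR hq hδ₀pos.le hδ₀lt hdom
      have step2 : mutualInfo p (U * Vt * (Φb * T')) ≤ (1 - δ₀) ^ s *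
          min (Real.logb 2 (Fintype.card (Fin M → A)))
              (Real.logb 2 (Fintype.card (Fin N → Qo))) := by
        have hassoc2 : U * Vt * (Φb * T') = (U * Vt * Φb) * T' := by
          simp only [Matrix.mul_assoc]
        rw [hassoc2, hT'def]
        have harith : a + K' + s * K' ≤ L' := by
          have he : (s + 1) * K' = s * K' + K' := by ring
          omega
        apply ih (a + K') L' harith (by omega) _ ((hU.mul hVtst).mul hΦst)
      calc mutualInfo p (U * V * (Φb * T'))
          ≤ (1 - δ₀) * mutualInfo p (U * Vt * (Φb * T')) := step1
        _ ≤ (1 - δ₀) * ((1 - δ₀) ^ s * _) := by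
            apply mul_le_mul_of_nonneg_left step2 (by linarith)
        _ = (1 - δ₀) ^ (s + 1) * _ := by rw [pow_succ]; ring
    · -- a + K' ≥ L' : last segment, s must be 0
      have hs0 : s = 0 := by
        have h3 : (s + 1) * K' = s * K' + K' := by ring
        rw [h3] at h1
        have h4 : s * K' = 0 := by omega
        rcases Nat.mul_eq_zero.mp h4 with h | h
        · exact h
        · omega
      subst hs0
      have hLK : a + K' = L' := by omega
      have hsplit : L' - 1 - a = K' - 1 := by omega
      rw [hsplit]
      have hmul1 : U * V = U * V * (1 : Matrix (Fin N → Qo) (Fin N → Qo) ℝ) := by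
        rw [Matrix.mul_one]
      rw [← hVdef, hmul1]
      have step1 := peel hp hU hVst (IsStoch.one) hq hδ₀pos.le hδ₀lt hdom
      have step2 : mutualInfo p (U * Vt * (1 : Matrix (Fin N → Qo) (Fin N → Qo) ℝ)) ≤
          min (Real.logb 2 (Fintype.card (Fin M → A)))
              (Real.logb 2 (Fintype.card (Fin N → Qo))) := by
        rw [Matrix.mul_one]
        exact le_min (mi_le_in hp (hU.mul hVtst)) (mi_le_out hp (hU.mul hVtst))
      calc mutualInfo p (U * V * (1 : Matrix (Fin N → Qo) (Fin N → Qo) ℝ))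
          ≤ (1 - δ₀) * mutualInfo p (U * Vt * (1 : Matrix (Fin N → Qo) (Fin N → Qo) ℝ)) := step1
        _ ≤ (1 - δ₀) * _ := mul_le_mul_of_nonneg_left step2 (by linarith)
        _ = (1 - δ₀) ^ (0 + 1) * _ := by rw [pow_one]


-- mutual info of constant-row channel is zero
lemma mi_const_rows {α β : Type*} [Fintype α] [Fintype β] {p : α → ℝ} (hp : IsDist p)
    {W : Matrix α β ℝ} (c : β → ℝ) (hW : ∀ x y, W x y = c y) : mutualInfo p W = 0 := by
  unfold mutualInfo
  apply Finset.sum_eq_zero; intro x _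
  apply Finset.sum_eq_zero; intro y _
  simp only [hW]
  have hs : ∑ x', p x' * c y = c y := by rw [← Finset.sum_mul, hp.2, one_mul]
  rw [hs]
  rcases eq_or_ne (c y) 0 with h | h
  · simp [h]
  · rw [div_self h, Real.logb_one, mul_zero]

lemma row_indicator {β : Type*} [Fintype β] [DecidableEq β] {w : β → ℝ}
    (h0 : ∀ y, 0 ≤ w y) (h1 : ∑ y, w y = 1) {y₀ : β} (hy : 1 ≤ w y₀) :
    ∀ y, w y = if y = y₀ then 1 else 0 := by
  have hle : w y₀ ≤ 1 := by
    calc w y₀ ≤ ∑ y, w y := Finset.single_le_sum (fun i _ => h0 i) (Finset.mem_univ y₀)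
      _ = 1 := h1
  have heq : w y₀ = 1 := le_antisymm hle hy
  have hsum : ∑ y ∈ Finset.univ.erase y₀, w y = 0 := by
    have := Finset.add_sum_erase Finset.univ w (Finset.mem_univ y₀)
    rw [h1, heq] at this
    linarith
  intro y
  by_cases hyy : y = y₀
  · simp [hyy, heq]
  · simp only [hyy, if_false]
    have := (Finset.sum_eq_zero_iff_of_nonneg (fun i _ => h0 i)).mp hsum y
      (Finset.mem_erase.mpr ⟨hyy, Finset.mem_univ y⟩)
    exact this

-- constant rows propagate through products
lemma constRows_mul_right {β γ η : Type*} [Fintype β] [Fintype γ] [Fintype η]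
    {C : Matrix β γ ℝ} {c : γ → ℝ} (hC : ∀ x y, C x y = c y) (T : Matrix γ η ℝ) :
    ∀ x y, (C * T) x y = ∑ g, c g * T g y := by
  intro x y
  rw [Matrix.mul_apply]
  exact Finset.sum_congr rfl fun g _ => by rw [hC]

lemma constRows_mul_left {α β γ : Type*} [Fintype α] [Fintype β] [Fintype γ]
    {U : Matrix α β ℝ} (hU : IsStoch U) {C : Matrix β γ ℝ} {c : γ → ℝ}
    (hC : ∀ x y, C x y = c y) : ∀ x y, (U * C) x y = c y := by
  intro x y
  rw [Matrix.mul_apply]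
  calc ∑ z, U x z * C z y = ∑ z, U x z * c y := Finset.sum_congr rfl fun z _ => by rw [hC]
    _ = (∑ z, U x z) * c y := (Finset.sum_mul _ _ _).symm
    _ = c y := by rw [(hU x).2, one_mul]


/-- Consider a line network of length `L` formed by DMCs
`Q₁,…,Q_L` with `ε_{Q_ℓ} ≥ ε > 0` for all `ℓ` (for every pair of inputs `x, x'` of
`Q_ℓ` there is an output `y` with `Q_ℓ(y|x) ≥ ε` and `Q_ℓ(y|x') ≥ ε`).  Then for every
batch size `M` and inner block-length `N`, the batched-code capacity satisfies
`C_L(M,N) ≤ ((1 - ε^{N(2|𝒬ᵢ|^N + K)})^{⌊L/K⌋} / N) · min{M log|A|, N log|𝒬ₒ|}`,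
where `K = ⌈N log₂|𝒬ᵢ|⌉`: every batched code's rate obeys this bound. -/
theorem stmt11 {A Qi Qo : Type} [Fintype A] [Fintype Qi] [Fintype Qo]
    (L M N : ℕ) (hL : 0 < L) (hM : 0 < M) (hN : 0 < N)
    (ε : ℝ) (hε : 0 < ε)
    (Q : ℕ → Matrix Qi Qo ℝ) (hQ : ∀ ℓ, IsStoch (Q ℓ))
    (hεQ : ∀ (ℓ : ℕ) (x x' : Qi), ∃ y, ε ≤ Q ℓ x y ∧ ε ≤ Q ℓ x' y)
    (F : Matrix (Fin M → A) (Fin N → Qi) ℝ) (hF : IsStoch F)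
    (Φ : ℕ → Matrix (Fin N → Qo) (Fin N → Qi) ℝ) (hΦ : ∀ ℓ, IsStoch (Φ ℓ))
    (p : (Fin M → A) → ℝ) (hp : IsDist p) :
    (1 / (N : ℝ)) * mutualInfo p (endToEnd L M N F Q Φ)
      ≤ ((1 - ε ^ (N * (2 * Fintype.card Qi ^ N +
              ⌈(N : ℝ) * Real.logb 2 (Fintype.card Qi)⌉₊))) ^
            (L / ⌈(N : ℝ) * Real.logb 2 (Fintype.card Qi)⌉₊) / (N : ℝ)) *
          min ((M : ℝ) * Real.logb 2 (Fintype.card A))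
              ((N : ℝ) * Real.logb 2 (Fintype.card Qo)) := by
  classical
  -- nonemptiness of the alphabets
  haveI hA : Nonempty A := by
    by_contra h
    rw [not_nonempty_iff] at h
    haveI : IsEmpty (Fin M → A) := ⟨fun f => h.false (f ⟨0, hM⟩)⟩
    have h2 := hp.2
    rw [Finset.univ_eq_empty, Finset.sum_empty] at h2
    norm_num at h2
  haveI hQiNe : Nonempty Qi := by
    by_contra h
    rw [not_nonempty_iff] at h
    haveI : IsEmpty (Fin N → Qi) := ⟨fun f => h.false (f ⟨0, hN⟩)⟩
    obtain ⟨x⟩ : Nonempty (Fin M → A) := inferInstance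
    have h2 := (hF x).2
    rw [Finset.univ_eq_empty, Finset.sum_empty] at h2
    norm_num at h2
  haveI hQoNe : Nonempty Qo := by
    by_contra h
    rw [not_nonempty_iff] at h
    obtain ⟨xi⟩ := hQiNe
    have h2 := (hQ 0 xi).2
    rw [Finset.univ_eq_empty, Finset.sum_empty] at h2
    norm_num at h2
  have hε1 : ε ≤ 1 := by
    obtain ⟨xi⟩ := hQiNe
    obtain ⟨y, h1, _⟩ := hεQ 0 xi xi
    exact le_trans h1 (entry_le_one (hQ 0) xi y)
  set K : ℕ := ⌈(N : ℝ) * Real.logb 2 (Fintype.card Qi)⌉₊ with hKdef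
  set e : ℕ := N * (2 * Fintype.card Qi ^ N + K) with hedef
  set m' : ℕ := L / K with hm'def
  have hcA : (1:ℝ) ≤ (Fintype.card A : ℝ) := by exact_mod_cast Fintype.card_pos
  have hcQo : (1:ℝ) ≤ (Fintype.card Qo : ℝ) := by exact_mod_cast Fintype.card_pos
  have hcQi : (1:ℝ) ≤ (Fintype.card Qi : ℝ) := by exact_mod_cast Fintype.card_pos
  have hminn : 0 ≤ min ((M : ℝ) * Real.logb 2 (Fintype.card A))
      ((N : ℝ) * Real.logb 2 (Fintype.card Qo)) :=
    le_min (mul_nonneg (Nat.cast_nonneg M) (Real.logb_nonneg one_lt_two hcA))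
      (mul_nonneg (Nat.cast_nonneg N) (Real.logb_nonneg one_lt_two hcQo))
  have hεe1 : ε ^ e ≤ 1 := pow_le_one₀ hε.le hε1
  have hbase : 0 ≤ 1 - ε ^ e := by linarith
  -- conversion of the two log bounds
  have hconv1 : Real.logb 2 (Fintype.card (Fin M → A)) =
      (M : ℝ) * Real.logb 2 (Fintype.card A) := by
    rw [Fintype.card_fun, Fintype.card_fin]
    push_cast
    rw [Real.logb_pow]
  have hconv2 : Real.logb 2 (Fintype.card (Fin N → Qo)) =
      (N : ℝ) * Real.logb 2 (Fintype.card Qo) := by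
    rw [Fintype.card_fun, Fintype.card_fin]
    push_cast
    rw [Real.logb_pow]
  set Qm : ℕ → Matrix (Fin N → Qi) (Fin N → Qo) ℝ := fun ℓ => tensorPow N (Q ℓ) with hQmdef
  have hQm : ∀ ℓ, IsStoch (Qm ℓ) := fun ℓ => isStoch_tensorPow N (hQ ℓ)
  have hchainEq : chain Qm Φ (L - 1) = tailc Qm Φ 0 (L - 1) := by
    simp [tailc]
  have hE2E : endToEnd L M N F Q Φ = F * tailc Qm Φ 0 (L - 1) := by
    rw [endToEnd, ← hchainEq]
  have hE2Est : IsStoch (endToEnd L M N F Q Φ) := by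
    rw [hE2E]
    exact hF.mul (isStoch_tailc hQm hΦ 0 (L - 1))
  rcases eq_or_lt_of_le hε1 with hεeq | hεlt
  · -- degenerate case ε = 1 : all rows of each Q ℓ coincide, mutual information is 0
    obtain ⟨x₀⟩ := hQiNe
    have hrows : ∀ ℓ (x x' : Qi), Q ℓ x = Q ℓ x' := by
      intro ℓ x x'
      obtain ⟨y, h1, h2⟩ := hεQ ℓ x x'
      rw [hεeq] at h1 h2
      funext y'
      rw [row_indicator (hQ ℓ x).1 (hQ ℓ x).2 h1 y',
        row_indicator (hQ ℓ x').1 (hQ ℓ x').2 h2 y']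
    have htens : ∀ ℓ (u : Fin N → Qi) (y : Fin N → Qo),
        Qm ℓ u y = ∏ i, Q ℓ x₀ (y i) := by
      intro ℓ u y
      show (∏ i, Q ℓ (u i) (y i)) = ∏ i, Q ℓ x₀ (y i)
      exact Finset.prod_congr rfl fun i _ => by rw [hrows ℓ (u i) x₀]
    have hchain : ∀ n, ∃ c : (Fin N → Qo) → ℝ, ∀ x y, chain Qm Φ n x y = c y := by
      intro n
      induction n with
      | zero =>
        exact ⟨fun y => ∏ i, Q 0 x₀ (y i), fun u y => htens 0 u y⟩
      | succ n ih =>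
        obtain ⟨c, hc⟩ := ih
        have hc2 := constRows_mul_right hc (Φ n)
        have hc3 := constRows_mul_right hc2 (Qm (n + 1))
        exact ⟨_, hc3⟩
    obtain ⟨c, hc⟩ := hchain (L - 1)
    have hMI : mutualInfo p (endToEnd L M N F Q Φ) = 0 :=
      mi_const_rows hp c (fun x y => constRows_mul_left hF hc x y)
    rw [hMI, mul_zero]
    exact mul_nonneg (div_nonneg (pow_nonneg hbase _) (Nat.cast_nonneg N)) hminn
  · by_cases hK0 : K = 0
    · -- K = 0 : the bound is the trivial one
      have hm0 : m' = 0 := by rw [hm'def, hK0, Nat.div_zero]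
      rw [hm0, pow_zero]
      have hb := le_min (mi_le_in hp hE2Est) (mi_le_out hp hE2Est)
      rw [hconv1, hconv2] at hb
      calc (1 / (N : ℝ)) * mutualInfo p (endToEnd L M N F Q Φ)
          ≤ (1 / (N : ℝ)) * min ((M : ℝ) * Real.logb 2 (Fintype.card A))
              ((N : ℝ) * Real.logb 2 (Fintype.card Qo)) :=
            mul_le_mul_of_nonneg_left hb (by positivity)
        _ = (1 / (N : ℝ)) * min ((M : ℝ) * Real.logb 2 (Fintype.card A))
              ((N : ℝ) * Real.logb 2 (Fintype.card Qo)) := rfl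
    · -- main case
      have hKpos : 0 < K := Nat.pos_of_ne_zero hK0
      have hcard : Fintype.card (Fin N → Qi) ≤ 2 ^ K := by
        rw [Fintype.card_fun, Fintype.card_fin]
        have hc0 : (0:ℝ) < (Fintype.card Qi : ℝ) := by linarith
        have hreal : ((Fintype.card Qi : ℝ)) ^ N ≤ (2:ℝ) ^ (K:ℕ) := by
          have h1 : (Fintype.card Qi : ℝ) =
              (2:ℝ) ^ (Real.logb 2 (Fintype.card Qi)) :=
            (Real.rpow_logb two_pos (by norm_num) hc0).symm
          rw [h1, ← Real.rpow_natCast ((2:ℝ) ^ Real.logb 2 ((Fintype.card Qi : ℕ) : ℝ)) N,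
            ← Real.rpow_natCast (2:ℝ) K, ← Real.rpow_mul (by norm_num : (0:ℝ) ≤ 2)]
          apply Real.rpow_le_rpow_of_exponent_le one_le_two
          calc Real.logb 2 ((Fintype.card Qi : ℕ) : ℝ) * (N:ℝ)
              = (N : ℝ) * Real.logb 2 (Fintype.card Qi) := by ring
            _ ≤ (K : ℝ) := by rw [hKdef]; exact Nat.le_ceil _
        exact_mod_cast hreal
      have h := main_aux M N K hN hKpos ε hε hεlt Q hQ hεQ Φ hΦ p hp hcard
        m' 0 L (by simpa using Nat.div_mul_le_self L K) hL F hF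
      rw [Nat.sub_zero] at h
      rw [hconv1, hconv2] at h
      rw [← hQmdef] at h
      have hεNK1 : ε ^ (N * K) ≤ 1 := pow_le_one₀ hε.le hε1
      have hεe_le : ε ^ e ≤ ε ^ (N * K) := by
        apply pow_le_pow_of_le_one hε.le hε1
        rw [hedef]
        exact Nat.mul_le_mul_left N (by omega)
      have hmono : (1 - ε ^ (N * K)) ^ m' ≤ (1 - ε ^ e) ^ m' := by
        apply pow_le_pow_left₀ (by linarith) (by linarith)
      have hMIb : mutualInfo p (endToEnd L M N F Q Φ) ≤ (1 - ε ^ e) ^ m' *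
          min ((M : ℝ) * Real.logb 2 (Fintype.card A))
              ((N : ℝ) * Real.logb 2 (Fintype.card Qo)) := by
        rw [hE2E]
        exact le_trans h (mul_le_mul_of_nonneg_right hmono hminn)
      calc (1 / (N : ℝ)) * mutualInfo p (endToEnd L M N F Q Φ)
          ≤ (1 / (N : ℝ)) * ((1 - ε ^ e) ^ m' *
              min ((M : ℝ) * Real.logb 2 (Fintype.card A))
                ((N : ℝ) * Real.logb 2 (Fintype.card Qo))) :=
            mul_le_mul_of_nonneg_left hMIb (by positivity)
        _ = ((1 - ε ^ e) ^ m' / (N : ℝ)) *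
              min ((M : ℝ) * Real.logb 2 (Fintype.card A))
                ((N : ℝ) * Real.logb 2 (Fintype.card Qo)) := by ring
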